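/- Let 𝒯_t be the set of tuples (i₀, i₁, ..., i_r) of nonnegative integers with i₀ ≥ 0, i_s ≥ 2 for all s ≥ 1, and i₀ + i₁ + ... + i_r = t. Then the sum over 𝒯_t of the multinomial coefficients t!/(i₀!·i₁!·⋯·i_r!) is at most (t/2 + 1)^t. -/

import Mathlib

open Finset Nat

-- aux: fold over range of length
lemma aux_prod (l : List ℕ) (f : ℕ → ℕ) :
    ∏ i ∈ Finset.range l.length, f (l.getD i 0) = (l.map f).prod := by
  induction l using List.reverseRecOn with
  | nil => simp
  | append_singleton xs x ih =>
    rw [List.length_append, List.length_singleton, Finset.prod_range_succ]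
    simp only [List.map_append, List.prod_append, List.map_singleton, List.prod_singleton]
    rw [← ih, List.getD_append_right _ _ _ _ le_rfl]
    simp only [Nat.sub_self]
    congr 1
    apply Finset.prod_congr rfl
    intro i hi
    rw [List.getD_append _ _ _ _ (Finset.mem_range.mp hi)]

lemma aux_sum (l : List ℕ) :
    ∑ i ∈ Finset.range l.length, l.getD i 0 = l.sum := by
  induction l using List.reverseRecOn with
  | nil => simp
  | append_singleton xs x ih =>
    rw [List.length_append, List.length_singleton, Finset.sum_range_succ]
    simp only [List.sum_append, List.sum_singleton]
    rw [← ih, List.getD_append_right _ _ _ _ le_rfl]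
    simp only [Nat.sub_self]
    congr 1
    apply Finset.sum_congr rfl
    intro i hi
    rw [List.getD_append _ _ _ _ (Finset.mem_range.mp hi)]

def phiL : List ℕ → (ℕ → ℕ) := fun l i => l.getD i 0

lemma hphiL (l : List ℕ) (i : ℕ) : phiL l i = l.getD i 0 := rfl

/-- Let `𝒯_t` be the set of tuples `(i₀, i₁, ..., i_r)` of nonnegative integers with
`i_s ≥ 2` for `s ≥ 1` and `i₀ + ⋯ + i_r = t` (represented as nonempty lists whose tail
entries are at least 2). Then the sum over `𝒯_t` of the multinomial coefficients
`t!/(i₀!⋯i_r!)` is at most `(⌊t/2⌋ + 1)^t`. -/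
theorem stmt_6 (t : ℕ) (ht : 0 < t) (S : Finset (List ℕ))
    (hS : ∀ l ∈ S, l ≠ [] ∧ l.sum = t ∧ ∀ s ∈ l.tail, 2 ≤ s) :
    ∑ l ∈ S, t.factorial / (l.map Nat.factorial).prod ≤ (t / 2 + 1) ^ t := by
  classical
  set n := t / 2 + 1 with hn
  -- length bound
  have hlen : ∀ l ∈ S, l.length ≤ n := by
    intro l hl
    obtain ⟨hne, hsum, htail⟩ := hS l hl
    obtain ⟨a, tl, rfl⟩ := List.exists_cons_of_ne_nil hne
    have h2 : 2 * tl.length ≤ tl.sum := by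
      have := List.sum_le_sum (l := tl) (f := fun _ => 2) (g := id)
        (fun i hi => htail i hi)
      simpa [List.map_const, List.sum_replicate, Nat.smul_one_eq_cast, mul_comm] using this
    have : tl.length ≤ t / 2 := by
      rw [Nat.le_div_iff_mul_le two_pos]
      calc tl.length * 2 = 2 * tl.length := mul_comm _ _
        _ ≤ tl.sum := h2
        _ ≤ t := by rw [← hsum]; simp [List.sum_cons]
    simpa [List.length_cons, hn] using Nat.succ_le_succ this
  -- membership in piAntidiag
  have hmem : ∀ l ∈ S, phiL l ∈ Finset.piAntidiag (Finset.range n) t := by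
    intro l hl
    obtain ⟨hne, hsum, htail⟩ := hS l hl
    rw [Finset.mem_piAntidiag]
    simp only [hphiL]
    constructor
    · change ∑ i ∈ Finset.range n, l.getD i 0 = t
      rw [← Finset.sum_subset (Finset.range_subset_range.mpr (hlen l hl))
        (fun i _ hi => List.getD_eq_default _ _ (le_of_not_gt
          (fun h => hi (Finset.mem_range.mpr h))))]
      rw [aux_sum]; exact hsum
    · intro i hi
      by_contra h
      exact hi (List.getD_eq_default _ _ (le_trans (hlen l hl)
        (le_of_not_gt (fun h' => h (Finset.mem_range.mpr h')))))
  -- injectivity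
  have hinj : ∀ l ∈ S, ∀ l' ∈ S, phiL l = phiL l' → l = l' := by
    have key : ∀ l ∈ S, ∀ l' ∈ S, l.length ≤ l'.length → phiL l = phiL l' → l.length = l'.length := by
      intro l hl l' hl' hle heq
      by_contra hne
      have hlt : l.length < l'.length := lt_of_le_of_ne hle hne
      obtain ⟨hne1, _, _⟩ := hS l hl
      obtain ⟨hne2, _, htail'⟩ := hS l' hl'
      have h1 : 1 ≤ l.length := List.length_pos_iff.mpr hne1
      have e0 : phiL l l.length = 0 := List.getD_eq_default _ _ le_rfl
      have e1 : 2 ≤ phiL l' l.length := by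
        obtain ⟨b, tl', rfl⟩ := List.exists_cons_of_ne_nil hne2
        obtain ⟨m, hm0⟩ := Nat.exists_eq_add_of_le h1
        have hm : m < tl'.length := by
          simp only [List.length_cons] at hlt; omega
        rw [hm0]
        have h2 : phiL (b :: tl') (1 + m) = tl'.getD m 0 := by
          rw [hphiL, Nat.add_comm 1 m]; rfl
        rw [h2, List.getD_eq_getElem _ _ hm]
        exact htail' _ (List.getElem_mem hm)
      rw [heq] at e0; omega
    intro l hl l' hl' heq
    have hlen' : l.length = l'.length := by
      rcases le_total l.length l'.length with h | h
      · exact key l hl l' hl' h heq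
      · exact (key l' hl' l hl h heq.symm).symm
    apply List.ext_getElem hlen'
    intro i h1 h2
    have h3 := congrFun heq i
    rw [hphiL, hphiL, List.getD_eq_getElem _ _ h1, List.getD_eq_getElem _ _ h2] at h3
    exact h3
  -- value
  have hval : ∀ l ∈ S, t.factorial / (l.map Nat.factorial).prod
      = Nat.multinomial (Finset.range n) (phiL l) := by
    intro l hl
    have hsum : ∑ i ∈ Finset.range n, phiL l i = t := (Finset.mem_piAntidiag.mp (hmem l hl)).1
    have hprod : ∏ i ∈ Finset.range n, (phiL l i).factorial = (l.map Nat.factorial).prod := by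
      simp only [hphiL]
      rw [← Finset.prod_subset (Finset.range_subset_range.mpr (hlen l hl))
        (fun i _ hi => by
          rw [List.getD_eq_default _ _ (le_of_not_gt (fun h => hi (Finset.mem_range.mpr h)))]
          rfl)]
      exact aux_prod l Nat.factorial
    rw [Nat.multinomial, hsum, hprod]
  calc ∑ l ∈ S, t.factorial / (l.map Nat.factorial).prod
      = ∑ l ∈ S, Nat.multinomial (Finset.range n) (phiL l) := Finset.sum_congr rfl hval
    _ = ∑ k ∈ S.image phiL, Nat.multinomial (Finset.range n) k := by
        rw [Finset.sum_image (fun l hl l' hl' => hinj l hl l' hl')]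
    _ ≤ ∑ k ∈ Finset.piAntidiag (Finset.range n) t, Nat.multinomial (Finset.range n) k := by
        apply Finset.sum_le_sum_of_subset
        intro k hk
        obtain ⟨l, hl, rfl⟩ := Finset.mem_image.mp hk
        exact hmem l hl
    _ = (∑ _i ∈ Finset.range n, (1 : ℕ)) ^ t := by
        rw [Finset.sum_pow_eq_sum_piAntidiag]
        simp
    _ = n ^ t := by simp
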